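/- There is a constant c > 0 such that for all ε ∈ (0,1/2), all δ ∈ (0, 63/64) and every u ∈ S₀(ε), the energy restricted to the strip [0,2ε]×[0,1] satisfies E_{ε,δ}(u, [0,2ε]×[0,1]) ≥ c·ε·δ² (Lemma 5.8). -/
import Mathlib


open Real Finset

noncomputable section

/-- `Kof ε` is the largest integer `K` with `K * ε < 1`. -/
def Kof (ε : ℝ) : ℤ := ⌈1 / ε⌉ - 1

/-- Index set of the lattice `[0,1)² ∩ εℤ²`. -/
def Idx (ε : ℝ) : Finset (ℤ × ℤ) :=
  Finset.Icc 0 (Kof ε) ×ˢ Finset.Icc 0 (Kof ε)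

/-- Indices `(i,j)` with `i + 2 ≤ K`. -/
def IdxH (ε : ℝ) : Finset (ℤ × ℤ) :=
  Finset.Icc 0 (Kof ε - 2) ×ˢ Finset.Icc 0 (Kof ε)

/-- Indices `(i,j)` with `j + 2 ≤ K`. -/
def IdxV (ε : ℝ) : Finset (ℤ × ℤ) :=
  Finset.Icc 0 (Kof ε) ×ˢ Finset.Icc 0 (Kof ε - 2)

/-- Squared Euclidean norm on `ℝ × ℝ`. -/
def sqnorm (v : ℝ × ℝ) : ℝ := v.1 ^ 2 + v.2 ^ 2

/-- Euclidean scalar product on `ℝ × ℝ`. -/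
def dotp (a b : ℝ × ℝ) : ℝ := a.1 * b.1 + a.2 * b.2

/-- Cross product `a × b = a₁b₂ − a₂b₁`. -/
def crossp (a b : ℝ × ℝ) : ℝ := a.1 * b.2 - a.2 * b.1

/-- sign with convention `sign 0 = -1`. -/
def sgn (x : ℝ) : ℝ := if 0 < x then 1 else -1

/-- A spin field: unit vectors on the lattice. -/
def IsSpin (ε : ℝ) (u : ℤ × ℤ → ℝ × ℝ) : Prop :=
  ∀ p ∈ Idx ε, sqnorm (u p) = 1

/-- Spin fields with ferromagnetic Dirichlet boundary condition on the left boundary. -/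
def InS0 (ε : ℝ) (u : ℤ × ℤ → ℝ × ℝ) : Prop :=
  IsSpin ε u ∧ ∀ j ∈ Finset.Icc (0 : ℤ) (Kof ε), u (0, j) = (0, 1)

/-- Horizontal part of the energy. -/
def Ehor (ε δ : ℝ) (u : ℤ × ℤ → ℝ × ℝ) : ℝ :=
  ε ^ 2 / 2 * ∑ p ∈ IdxH ε,
    sqnorm (u p - (2 * (1 - δ)) • u (p.1 + 1, p.2) + u (p.1 + 2, p.2))

/-- Vertical part of the energy. -/
def Ever (ε δ : ℝ) (u : ℤ × ℤ → ℝ × ℝ) : ℝ :=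
  ε ^ 2 / 2 * ∑ p ∈ IdxV ε,
    sqnorm (u p - (2 * (1 - δ)) • u (p.1, p.2 + 1) + u (p.1, p.2 + 2))

/-- The total energy `E_{ε,δ}`. -/
def E (ε δ : ℝ) (u : ℤ × ℤ → ℝ × ℝ) : ℝ := Ehor ε δ u + Ever ε δ u

/-- The scaling function `s(ε,δ)`. -/
def sfun (ε δ : ℝ) : ℝ :=
  min (δ ^ 2)
    (min (ε * (δ * Real.sqrt δ) * (|Real.log (ε / Real.sqrt δ)| + 1)) (ε * Real.sqrt δ))

/-- Horizontal angular velocity of a spin field. -/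
def thetaH (u : ℤ × ℤ → ℝ × ℝ) (p : ℤ × ℤ) : ℝ :=
  sgn (crossp (u p) (u (p.1 + 1, p.2))) * Real.arccos (dotp (u p) (u (p.1 + 1, p.2)))

/-- Vertical angular velocity of a spin field. -/
def thetaV (u : ℤ × ℤ → ℝ × ℝ) (p : ℤ × ℤ) : ℝ :=
  sgn (crossp (u p) (u (p.1, p.2 + 1))) * Real.arccos (dotp (u p) (u (p.1, p.2 + 1)))

/-- The function `p` of Lemma 3.1. -/
def pfun (θ₁ θ₂ : ℝ) : ℝ :=
  if θ₁ = θ₂ then 1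
  else (Real.sin θ₁ ^ 2 + Real.sin θ₂ ^ 2 - (1 - Real.cos (θ₁ + θ₂))) /
    (2 * (Real.sin (θ₂ / 2) - Real.sin (θ₁ / 2)) ^ 2)

end

/-- Energy restricted to the strip `[0,2ε] × [0,1]`: both sums restricted to base
indices `(i,j)` with `i ≤ 2`. -/
noncomputable def Estrip (ε δ : ℝ) (u : ℤ × ℤ → ℝ × ℝ) : ℝ :=
  ε ^ 2 / 2 * ∑ p ∈ (IdxH ε).filter (fun p => p.1 ≤ 2),
      sqnorm (u p - (2 * (1 - δ)) • u (p.1 + 1, p.2) + u (p.1 + 2, p.2)) +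
  ε ^ 2 / 2 * ∑ p ∈ (IdxV ε).filter (fun p => p.1 ≤ 2),
      sqnorm (u p - (2 * (1 - δ)) • u (p.1, p.2 + 1) + u (p.1, p.2 + 2))

/-- Lemma 5.8: lower bound on the boundary strip for `δ` bounded away from `1`. -/
theorem strip_lower_bound_intermediate_delta :
    ∃ c : ℝ, 0 < c ∧ ∀ ε δ : ℝ, ε ∈ Set.Ioo (0 : ℝ) (1 / 2) →
      δ ∈ Set.Ioo (0 : ℝ) (63 / 64) →
      ∀ u : ℤ × ℤ → ℝ × ℝ, InS0 ε u → c * (ε * δ ^ 2) ≤ Estrip ε δ u := by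
  refine ⟨1/2, by norm_num, ?_⟩
  intro ε δ hε hδ u hu
  obtain ⟨hε0, hε2⟩ := hε
  obtain ⟨hδ0, _⟩ := hδ
  obtain ⟨hspin, hbd⟩ := hu
  have hK2 : (2:ℤ) ≤ Kof ε := by
    have h2 : (2:ℝ) < 1/ε := by rw [lt_div_iff₀ hε0]; linarith
    have h3 : (2:ℤ) < ⌈1/ε⌉ := Int.lt_ceil.mpr (by exact_mod_cast h2)
    unfold Kof; omega
  have hKr : 1/ε - 1 ≤ ((Kof ε : ℝ)) := by
    have := Int.le_ceil (1/ε)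
    unfold Kof; push_cast; linarith
  -- the subset of the vertical sum: column i = 0
  set S : Finset (ℤ × ℤ) := ({(0:ℤ)} : Finset ℤ) ×ˢ Finset.Icc (0:ℤ) (Kof ε - 2) with hS
  have hsub : S ⊆ (IdxV ε).filter (fun p => p.1 ≤ 2) := by
    intro p hp
    simp only [hS, Finset.mem_product, Finset.mem_singleton, Finset.mem_Icc] at hp
    simp only [Finset.mem_filter, IdxV, Finset.mem_product, Finset.mem_Icc]
    omega
  have hterm : ∀ p ∈ S,
      sqnorm (u p - (2 * (1 - δ)) • u (p.1, p.2 + 1) + u (p.1, p.2 + 2)) = 4 * δ ^ 2 := by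
    intro p hp
    simp only [hS, Finset.mem_product, Finset.mem_singleton, Finset.mem_Icc] at hp
    obtain ⟨h1, h2a, h2b⟩ := hp
    have e0 : u p = (0,1) := by
      conv_lhs => rw [← Prod.mk.eta (p := p), h1]
      exact hbd p.2 (Finset.mem_Icc.mpr ⟨h2a, by omega⟩)
    have e1 : u (p.1, p.2 + 1) = (0,1) := by
      rw [h1]; exact hbd (p.2 + 1) (Finset.mem_Icc.mpr ⟨by omega, by omega⟩)
    have e2 : u (p.1, p.2 + 2) = (0,1) := by
      rw [h1]; exact hbd (p.2 + 2) (Finset.mem_Icc.mpr ⟨by omega, by omega⟩)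
    rw [e0, e1, e2]
    simp only [sqnorm, Prod.fst_add, Prod.fst_sub, Prod.smul_fst, Prod.snd_add,
      Prod.snd_sub, Prod.smul_snd, smul_eq_mul]
    ring
  have hnonneg : ∀ (T : Finset (ℤ × ℤ)) (f : ℤ × ℤ → ℝ × ℝ),
      0 ≤ ∑ p ∈ T, sqnorm (f p) := by
    intro T f
    exact Finset.sum_nonneg fun p _ => add_nonneg (sq_nonneg _) (sq_nonneg _)
  have hSsum : ∑ p ∈ S, sqnorm (u p - (2 * (1 - δ)) • u (p.1, p.2 + 1) + u (p.1, p.2 + 2))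
      = ((Kof ε : ℝ) - 1) * (4 * δ ^ 2) := by
    rw [Finset.sum_congr rfl hterm, Finset.sum_const, nsmul_eq_mul]
    congr 1
    simp only [hS, Finset.card_product, Finset.card_singleton, one_mul, Int.card_Icc]
    have h1 : (Kof ε - 2 + 1 - 0).toNat = (Kof ε - 1).toNat := by omega
    rw [h1, ← Int.cast_natCast (R := ℝ), Int.toNat_of_nonneg (by omega)]
    push_cast
    ring
  have hVsum : ((Kof ε : ℝ) - 1) * (4 * δ ^ 2) ≤
      ∑ p ∈ (IdxV ε).filter (fun p => p.1 ≤ 2),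
        sqnorm (u p - (2 * (1 - δ)) • u (p.1, p.2 + 1) + u (p.1, p.2 + 2)) := by
    rw [← hSsum]
    exact Finset.sum_le_sum_of_subset_of_nonneg hsub
      (fun p _ _ => add_nonneg (sq_nonneg _) (sq_nonneg _))
  have hεK : 1/4 ≤ ε * ((Kof ε : ℝ) - 1) := by
    rcases le_or_gt ε (1/4) with hc | hc
    · have h1 : ε * (1/ε) = 1 := by field_simp
      nlinarith
    · have h2 : (1:ℝ) ≤ (Kof ε : ℝ) - 1 := by
        have : ((2:ℤ):ℝ) ≤ (Kof ε : ℝ) := by exact_mod_cast hK2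
        push_cast at this; linarith
      nlinarith
  have hεsq : (0:ℝ) ≤ ε ^ 2 / 2 := by positivity
  unfold Estrip
  have hH : 0 ≤ ε ^ 2 / 2 * ∑ p ∈ (IdxH ε).filter (fun p => p.1 ≤ 2),
      sqnorm (u p - (2 * (1 - δ)) • u (p.1 + 1, p.2) + u (p.1 + 2, p.2)) :=
    mul_nonneg hεsq (hnonneg _ _)
  have hV : ε ^ 2 / 2 * (((Kof ε : ℝ) - 1) * (4 * δ ^ 2)) ≤
      ε ^ 2 / 2 * ∑ p ∈ (IdxV ε).filter (fun p => p.1 ≤ 2),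
        sqnorm (u p - (2 * (1 - δ)) • u (p.1, p.2 + 1) + u (p.1, p.2 + 2)) :=
    mul_le_mul_of_nonneg_left hVsum hεsq
  have key : 1/2 * (ε * δ ^ 2) ≤ ε ^ 2 / 2 * (((Kof ε : ℝ) - 1) * (4 * δ ^ 2)) := by
    nlinarith [mul_le_mul_of_nonneg_left hεK (show (0:ℝ) ≤ 2*ε*δ^2 by positivity)]
  linarith
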